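/- Let σ be a substitution over a finite alphabet A such that the images σ(b) of all letters b start with the same letter a. If u, v are nonempty factors of an infinite word ω with abelianization difference Δ = Ab(u) − Ab(v), then for every p ∈ {0, ±1, ±2} the word σ(ω) contains factors u', v' with Ab(u') − Ab(v') = M_σ·Δ + p·e_a, where e_a is the a-th standard basis vector. -/

import Mathlib

def prefixW {A : Type*} (w : ℕ → A) (n : ℕ) : List A := (List.range n).map w

def IsFactor {A : Type*} (w : ℕ → A) (u : List A) : Prop :=
  ∃ k, u = (List.range u.length).map (fun t => w (k + t))

def applySub {A : Type*} (σ : A → List A) (w : List A) : List A := w.flatMap σ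

def SubstOfInf {A : Type*} (σ : A → List A) (w' w : ℕ → A) : Prop :=
  ∀ m, prefixW w (applySub σ (prefixW w' m)).length = applySub σ (prefixW w' m)

def FactorOfImage {A : Type*} (σ : A → List A) (ω : ℕ → A) (u : List A) : Prop :=
  ∃ w, IsFactor ω w ∧ u <:+: applySub σ w

def BalancedWord {A : Type*} [DecidableEq A] (C : ℕ) (w : ℕ → A) : Prop :=
  ∀ u v, IsFactor w u → IsFactor w v → u.length = v.length →
    ∀ i, |(u.count i : ℤ) - (v.count i : ℤ)| ≤ (C : ℤ)

lemma count_applySub {A : Type*} [Fintype A] [DecidableEq A] (σ : A → List A)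
    (u : List A) (i : A) :
    ((applySub σ u).count i : ℤ) = ∑ j : A, ((σ j).count i : ℤ) * (u.count j : ℤ) := by
  induction u with
  | nil => simp [applySub]
  | cons b t ih =>
      have h : applySub σ (b :: t) = σ b ++ applySub σ t := by simp [applySub]
      rw [h, List.count_append]
      push_cast
      rw [ih]
      have : ∀ j : A, ((σ j).count i : ℤ) * ((b :: t).count j : ℤ)
          = ((σ j).count i : ℤ) * (t.count j : ℤ)
            + (if j = b then ((σ j).count i : ℤ) else 0) := by
        intro j
        rw [List.count_cons]
        push_cast
        rcases eq_or_ne j b with rfl | hj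
        · simp; ring
        · simp [hj, Ne.symm hj]
      rw [Finset.sum_congr rfl (fun j _ => this j), Finset.sum_add_distrib,
        Finset.sum_ite_eq' Finset.univ b (fun j => ((σ j).count i : ℤ))]
      simp
      ring

lemma choice_lemma {A : Type*} [Fintype A] [DecidableEq A] (σ : A → List A) (a : A)
    (hσ : ∀ b : A, (σ b).head? = some a)
    (ω : ℕ → A) (u : List A) (hu : IsFactor ω u) (hune : u ≠ [])
    (ε : ℤ) (hε : ε = 0 ∨ ε = 1 ∨ ε = -1) :
    ∃ u', FactorOfImage σ ω u' ∧ ∀ i : A,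
      (u'.count i : ℤ) = ((applySub σ u).count i : ℤ) + ε * (if i = a then 1 else 0) := by
  have hσne : ∀ b : A, σ b ≠ [] := by
    intro b h
    have := hσ b
    rw [h] at this
    simp at this
  rcases hε with h0 | h1 | hm
  · exact ⟨applySub σ u, ⟨u, hu, List.infix_refl _⟩, fun i => by simp [h0]⟩
  · -- append an `a` at the end
    obtain ⟨k, hk⟩ := hu
    set b := ω (k + u.length) with hb
    refine ⟨applySub σ u ++ [a], ⟨u ++ [b], ?_, ?_⟩, ?_⟩
    · refine ⟨k, ?_⟩
      have hlen : (u ++ [b]).length = u.length + 1 := by simp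
      rw [hlen, List.range_succ, List.map_append, ← hk]
      simp [hb]
    · have happ : applySub σ (u ++ [b]) = applySub σ u ++ σ b := by
        simp [applySub]
      rw [happ]
      have hcons : a :: (σ b).tail = σ b := List.cons_head?_tail (hσ b)
      refine List.IsPrefix.isInfix ?_
      rw [← hcons]
      exact ⟨(σ b).tail, by simp⟩
    · intro i
      rw [List.count_append]
      push_cast
      rcases eq_or_ne i a with rfl | hi
      · simp [h1]
      · have h2 : (a == i) = false := beq_eq_false_iff_ne.2 (Ne.symm hi)
        simp [hi, h2, List.count_eq_zero]
  · -- remove the leading `a`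
    obtain ⟨c, t, rfl⟩ := List.exists_cons_of_ne_nil hune
    have happ : applySub σ (c :: t) = σ c ++ applySub σ t := by simp [applySub]
    have hcons : a :: (σ c).tail = σ c := List.cons_head?_tail (hσ c)
    have hrepr : applySub σ (c :: t) = a :: ((σ c).tail ++ applySub σ t) := by
      rw [happ, ← hcons]; simp
    refine ⟨(σ c).tail ++ applySub σ t, ⟨c :: t, hu, ?_⟩, ?_⟩
    · rw [hrepr]
      exact (List.suffix_cons a _).isInfix
    · intro i
      rw [hrepr, List.count_cons]
      push_cast
      rcases eq_or_ne i a with rfl | hi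
      · simp [hm]
      · have h2 : (a == i) = false := beq_eq_false_iff_ne.2 (Ne.symm hi)
        simp [hi, h2]

theorem stmt3 {A : Type*} [Fintype A] [DecidableEq A] (σ : A → List A) (a : A)
    (hσ : ∀ b : A, (σ b).head? = some a)
    (ω : ℕ → A) (u v : List A) (hu : IsFactor ω u) (hv : IsFactor ω v)
    (hune : u ≠ []) (hvne : v ≠ [])
    (p : ℤ) (hp : p ∈ ({0, 1, -1, 2, -2} : Set ℤ)) :
    ∃ u' v', FactorOfImage σ ω u' ∧ FactorOfImage σ ω v' ∧
      ∀ i : A, (u'.count i : ℤ) - (v'.count i : ℤ) =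
        (∑ j : A, ((σ j).count i : ℤ) * ((u.count j : ℤ) - (v.count j : ℤ)))
          + p * (if i = a then 1 else 0) := by
  -- choose ε_u, ε_v with ε_u - ε_v = p
  have key : ∀ εu εv : ℤ, (εu = 0 ∨ εu = 1 ∨ εu = -1) → (εv = 0 ∨ εv = 1 ∨ εv = -1) →
      εu - εv = p →
      ∃ u' v', FactorOfImage σ ω u' ∧ FactorOfImage σ ω v' ∧
      ∀ i : A, (u'.count i : ℤ) - (v'.count i : ℤ) =
        (∑ j : A, ((σ j).count i : ℤ) * ((u.count j : ℤ) - (v.count j : ℤ)))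
          + p * (if i = a then 1 else 0) := by
    intro εu εv hεu hεv hsum
    obtain ⟨u', hu', hcu⟩ := choice_lemma σ a hσ ω u hu hune εu hεu
    obtain ⟨v', hv', hcv⟩ := choice_lemma σ a hσ ω v hv hvne εv hεv
    refine ⟨u', v', hu', hv', fun i => ?_⟩
    rw [hcu i, hcv i, count_applySub, count_applySub, ← hsum]
    have hs : ∑ j : A, ((σ j).count i : ℤ) * ((u.count j : ℤ) - (v.count j : ℤ))
        = ∑ j : A, ((σ j).count i : ℤ) * (u.count j : ℤ)
          - ∑ j : A, ((σ j).count i : ℤ) * (v.count j : ℤ) := by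
      rw [← Finset.sum_sub_distrib]
      exact Finset.sum_congr rfl (fun j _ => by ring)
    rw [hs]; ring
  simp only [Set.mem_insert_iff, Set.mem_singleton_iff] at hp
  rcases hp with rfl | rfl | rfl | rfl | rfl
  · exact key 0 0 (by norm_num) (by norm_num) (by norm_num)
  · exact key 1 0 (by norm_num) (by norm_num) (by norm_num)
  · exact key 0 1 (by norm_num) (by norm_num) (by norm_num)
  · exact key 1 (-1) (by norm_num) (by norm_num) (by norm_num)
  · exact key (-1) 1 (by norm_num) (by norm_num) (by norm_num)
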